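/- Practical stability with time-varying feasible sets (Theorem 5, per-loop form): in the self-triggered value-function setting, let (I_n)_{n∈ℕ} be a sequence of nonempty subsets of I⁰ with p* ∈ I_n for all n ≥ 1. Let x : ℕ → ℝⁿ and i : ℕ → ℕ be such that for every n, i(n) ∈ I_n attains the minimum V_n = min_{j ∈ I_n} ( α/j + x(n)ᵀ P^{(j)} x(n) ), and x(n+1) = M^{(i(n))} x(n). Then for every n, α/γ ≤ V_n, and limsup_{n→∞} V_n ≤ (α/ε)·( 1/p* − (1−ε)/γ ). -/

import Mathlib

open Matrix Finset Filter

/-- Theorem 5, per-loop form: practical stability of the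
self-triggered MPC with time-varying feasible sets Iₙ ⊆ I⁰ containing p* for
all n ≥ 1. -/
theorem self_triggered_practical_stability_time_varying {n : ℕ}
    (I0 : Finset ℕ) (hne : I0.Nonempty) (hpos : ∀ i ∈ I0, 0 < i)
    (γ : ℕ) (hγ : γ = I0.max' hne)
    (pstar : ℕ) (hpstar : pstar ∈ I0)
    (α : ℝ) (hα : 0 < α)
    (P : ℕ → Matrix (Fin n) (Fin n) ℝ) (hP : ∀ i ∈ I0, (P i).PosSemidef)
    (M : ℕ → Matrix (Fin n) (Fin n) ℝ)
    (ε : ℝ) (hε0 : 0 < ε) (hε1 : ε ≤ 1)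
    (hcontr : ∀ i ∈ I0, ((1 - ε) • P i - (M i)ᵀ * P pstar * M i).PosSemidef)
    (Iset : ℕ → Finset ℕ) (hIsub : ∀ k, Iset k ⊆ I0)
    (hIne : ∀ k, (Iset k).Nonempty)
    (hIp : ∀ k, 1 ≤ k → pstar ∈ Iset k)
    (x : ℕ → Fin n → ℝ) (idx : ℕ → ℕ)
    (Vn : ℕ → ℝ)
    (hVn : ∀ k, Vn k =
      (Iset k).inf' (hIne k) (fun j => α / (j : ℝ) + x k ⬝ᵥ (P j *ᵥ x k)))
    (hidx : ∀ k, idx k ∈ Iset k)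
    (hattain : ∀ k, α / (idx k : ℝ) + x k ⬝ᵥ (P (idx k) *ᵥ x k) = Vn k)
    (hdyn : ∀ k, x (k + 1) = M (idx k) *ᵥ x k) :
    (∀ k, α / (γ : ℝ) ≤ Vn k) ∧
    Filter.limsup Vn Filter.atTop ≤
      (α / ε) * (1 / (pstar : ℝ) - (1 - ε) / (γ : ℝ)) := by
  have hpstar_pos : 0 < pstar := hpos pstar hpstar
  have hγ_ge : ∀ j ∈ I0, j ≤ γ := by
    intro j hj; rw [hγ]; exact Finset.le_max' I0 j hj
  have hγ_pos : 0 < γ := lt_of_lt_of_le hpstar_pos (hγ_ge pstar hpstar)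
  have hγR : (0:ℝ) < (γ:ℝ) := by exact_mod_cast hγ_pos
  have hpsR : (0:ℝ) < (pstar:ℝ) := by exact_mod_cast hpstar_pos
  -- quadratic forms are nonnegative
  have hquad : ∀ (j : ℕ), j ∈ I0 → ∀ v : Fin n → ℝ, 0 ≤ v ⬝ᵥ (P j *ᵥ v) := by
    intro j hj v
    have := (hP j hj).dotProduct_mulVec_nonneg v
    simpa using this
  -- lower bound
  have hlow : ∀ k, α / (γ : ℝ) ≤ Vn k := by
    intro k
    rw [hVn k]
    apply Finset.le_inf'
    intro j hj
    have hjI0 : j ∈ I0 := hIsub k hj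
    have hj_pos : 0 < j := hpos j hjI0
    have h1 : α / (γ:ℝ) ≤ α / (j:ℝ) := by
      apply div_le_div_of_nonneg_left hα.le (by exact_mod_cast hj_pos)
      exact_mod_cast hγ_ge j hjI0
    have h2 := hquad j hjI0 (x k)
    linarith
  refine ⟨hlow, ?_⟩
  set Vstar : ℝ := (α / ε) * (1 / (pstar : ℝ) - (1 - ε) / (γ : ℝ)) with hVstar
  set c : ℝ := α / (pstar:ℝ) - (1 - ε) * (α / (γ:ℝ)) with hc
  have hcV : c = ε * Vstar := by
    rw [hVstar, hc]
    field_simp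
  -- contraction step for quadratic forms
  have hcontr' : ∀ k, x (k+1) ⬝ᵥ (P pstar *ᵥ x (k+1)) ≤
      (1 - ε) * (x k ⬝ᵥ (P (idx k) *ᵥ x k)) := by
    intro k
    have hiI0 : idx k ∈ I0 := hIsub k (hidx k)
    have h := (hcontr (idx k) hiI0).dotProduct_mulVec_nonneg (x k)
    rw [hdyn k]
    have hrw : (M (idx k) *ᵥ x k) ⬝ᵥ (P pstar *ᵥ (M (idx k) *ᵥ x k)) =
        x k ⬝ᵥ (((M (idx k))ᵀ * P pstar * M (idx k)) *ᵥ x k) := by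
      rw [← Matrix.mulVec_mulVec, ← Matrix.mulVec_mulVec,
        Matrix.dotProduct_mulVec (x k) ((M (idx k))ᵀ), Matrix.vecMul_transpose]
    rw [hrw]
    have hsub : x k ⬝ᵥ (((1 - ε) • P (idx k) - (M (idx k))ᵀ * P pstar * M (idx k)) *ᵥ x k)
        = (1 - ε) * (x k ⬝ᵥ (P (idx k) *ᵥ x k))
          - x k ⬝ᵥ (((M (idx k))ᵀ * P pstar * M (idx k)) *ᵥ x k) := by
      rw [Matrix.sub_mulVec, dotProduct_sub, Matrix.smul_mulVec,
        dotProduct_smul]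
      simp [smul_eq_mul]
    have h0 : 0 ≤ x k ⬝ᵥ (((1 - ε) • P (idx k) - (M (idx k))ᵀ * P pstar * M (idx k)) *ᵥ x k) := by
      simpa using h
    linarith [hsub ▸ h0]
  -- one-step recursion on Vn
  have hstep : ∀ k, Vn (k+1) ≤ (1 - ε) * Vn k + c := by
    intro k
    have hp_mem : pstar ∈ Iset (k+1) := hIp (k+1) (Nat.le_add_left 1 k)
    have hVle : Vn (k+1) ≤ α / (pstar:ℝ) + x (k+1) ⬝ᵥ (P pstar *ᵥ x (k+1)) := by
      rw [hVn (k+1)]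
      exact Finset.inf'_le _ hp_mem
    have hquadk : x k ⬝ᵥ (P (idx k) *ᵥ x k) = Vn k - α / (idx k : ℝ) := by
      have := hattain k; linarith
    have hidxγ : α / (γ:ℝ) ≤ α / (idx k : ℝ) := by
      have hiI0 : idx k ∈ I0 := hIsub k (hidx k)
      apply div_le_div_of_nonneg_left hα.le
        (by exact_mod_cast hpos (idx k) hiI0)
      exact_mod_cast hγ_ge (idx k) hiI0
    have h1 := hcontr' k
    have h1ε : (0:ℝ) ≤ 1 - ε := by linarith
    have h2 : (1 - ε) * (x k ⬝ᵥ (P (idx k) *ᵥ x k)) ≤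
        (1 - ε) * (Vn k - α / (γ:ℝ)) := by
      rw [hquadk]
      apply mul_le_mul_of_nonneg_left _ h1ε
      linarith
    calc Vn (k+1) ≤ α / (pstar:ℝ) + x (k+1) ⬝ᵥ (P pstar *ᵥ x (k+1)) := hVle
      _ ≤ α / (pstar:ℝ) + (1 - ε) * (Vn k - α / (γ:ℝ)) := by linarith
      _ = (1 - ε) * Vn k + c := by rw [hc]; ring
  -- geometric decay of Vn - Vstar
  set C : ℝ := max (Vn 0 - Vstar) 0 with hC
  have hC0 : 0 ≤ C := le_max_right _ _
  have h1ε : (0:ℝ) ≤ 1 - ε := by linarith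
  have hgeom : ∀ k, Vn k - Vstar ≤ (1 - ε) ^ k * C := by
    intro k
    induction k with
    | zero => simp only [pow_zero, one_mul]; exact le_max_left _ _
    | succ k ih =>
      have h := hstep k
      have : Vn (k+1) - Vstar ≤ (1 - ε) * (Vn k - Vstar) := by
        rw [hcV] at h; nlinarith
      calc Vn (k+1) - Vstar ≤ (1 - ε) * (Vn k - Vstar) := this
        _ ≤ (1 - ε) * ((1 - ε) ^ k * C) := mul_le_mul_of_nonneg_left ih h1ε
        _ = (1 - ε) ^ (k+1) * C := by ring
  -- pass to the limsup
  have htend : Filter.Tendsto (fun k => Vstar + (1 - ε) ^ k * C) Filter.atTop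
      (nhds Vstar) := by
    have h1 : Filter.Tendsto (fun k : ℕ => (1 - ε) ^ k) Filter.atTop (nhds 0) := by
      apply tendsto_pow_atTop_nhds_zero_of_lt_one h1ε
      linarith
    have := ((h1.mul_const C).const_add Vstar)
    simpa using this
  have hle : ∀ k, Vn k ≤ Vstar + (1 - ε) ^ k * C := by
    intro k; have := hgeom k; linarith
  have hbdd : Filter.IsBoundedUnder (· ≤ ·) Filter.atTop
      (fun k => Vstar + (1 - ε) ^ k * C) := htend.isBoundedUnder_le
  have hcobdd : Filter.IsCoboundedUnder (· ≤ ·) Filter.atTop Vn := by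
    have hb : Filter.IsBoundedUnder (· ≥ ·) Filter.atTop Vn :=
      ⟨α / (γ:ℝ), Filter.eventually_map.2 (Filter.Eventually.of_forall hlow)⟩
    exact hb.isCoboundedUnder_le
  calc Filter.limsup Vn Filter.atTop
      ≤ Filter.limsup (fun k => Vstar + (1 - ε) ^ k * C) Filter.atTop :=
        Filter.limsup_le_limsup (Filter.Eventually.of_forall hle) hcobdd hbdd
    _ = Vstar := htend.limsup_eq
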